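/- Let Z, Y be real normed vector spaces and (κ_t)_{t∈ℤ₋} a sequence of continuous linear maps Z → Y such that lim_{t→−∞} ‖κ_t‖_op = 0 and κ_t ≠ 0 for infinitely many t. Then with the weighting sequence w_t = sup_{s≤t} min{1, ‖κ_s‖_op}, w is monotone, takes values in (0,1], tends to 0 as t → −∞, and ‖Σ_{t≤0} κ_t(z_t)‖_Y ≤ C · Σ_{t≤0} w_t ‖z_t‖ for all z ∈ ℓ^1(Z), where C = sup_{t≤0} max{1, ‖κ_t‖_op}. -/
import Mathlib


open Filter

/-- If `‖κ_t‖ → 0` as `t → -∞` and `κ_t ≠ 0` for infinitely many `t`, then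
`w_t = sup_{s ≤ t} min{1, ‖κ_s‖}` is a weighting sequence and the convolution functional
satisfies a `1`-weighted bound with constant `C = sup_t max{1, ‖κ_t‖}`.  Sequences over `ℤ₋`
are encoded as `ℕ → Z` (index `n` is time `-n`); thus `sup_{s ≤ t}` becomes `⨆ m, ·(n + m)`. -/
theorem stmt4
    {Z Y : Type*} [NormedAddCommGroup Z] [NormedSpace ℝ Z]
    [NormedAddCommGroup Y] [NormedSpace ℝ Y]
    (κ : ℕ → Z →L[ℝ] Y)
    (h0 : Tendsto (fun n => ‖κ n‖) atTop (nhds 0))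
    (hinf : ∀ N : ℕ, ∃ n ≥ N, κ n ≠ 0) :
    let w : ℕ → ℝ := fun n => ⨆ m : ℕ, min 1 ‖κ (n + m)‖
    let C : ℝ := ⨆ n : ℕ, max 1 ‖κ n‖
    (∀ n, w (n + 1) ≤ w n) ∧ (∀ n, 0 < w n ∧ w n ≤ 1) ∧
    Tendsto w atTop (nhds 0) ∧
    ∀ z : ℕ → Z, (Summable fun n => ‖z n‖) →
      (Summable fun n => ‖(κ n) (z n)‖) ∧
      ‖∑' n, (κ n) (z n)‖ ≤ C * ∑' n, w n * ‖z n‖ := by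
  intro w C
  have hbdd : ∀ n : ℕ, BddAbove (Set.range fun m : ℕ => min 1 ‖κ (n + m)‖) := by
    intro n
    refine ⟨1, ?_⟩
    rintro x ⟨m, rfl⟩
    exact min_le_left _ _
  have hw_le_one : ∀ n, w n ≤ 1 := fun n => ciSup_le fun m => min_le_left _ _
  have hw_mono : ∀ n, w (n + 1) ≤ w n := by
    intro n
    refine ciSup_le fun m => ?_
    have h : n + 1 + m = n + (m + 1) := by ring
    rw [h]
    exact le_ciSup (hbdd n) (m + 1)
  have hw_pos : ∀ n, 0 < w n := by
    intro n
    obtain ⟨k, hk, hne⟩ := hinf n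
    have hle : min 1 ‖κ (n + (k - n))‖ ≤ w n := le_ciSup (hbdd n) (k - n)
    have hkk : n + (k - n) = k := by omega
    rw [hkk] at hle
    have hpos : 0 < min 1 ‖κ k‖ := lt_min one_pos (norm_pos_iff.mpr hne)
    linarith
  have hw_term : ∀ n, min 1 ‖κ n‖ ≤ w n := by
    intro n
    have := le_ciSup (hbdd n) 0
    simpa using this
  -- C bounds
  obtain ⟨M, hM⟩ := h0.bddAbove_range
  have hCbdd : BddAbove (Set.range fun n : ℕ => max 1 ‖κ n‖) := by
    refine ⟨max 1 M, ?_⟩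
    rintro x ⟨n, rfl⟩
    exact max_le_max le_rfl (hM ⟨n, rfl⟩)
  have hC_term : ∀ n, max 1 ‖κ n‖ ≤ C := fun n => le_ciSup hCbdd n
  have hC1 : 1 ≤ C := le_trans (le_max_left _ _) (hC_term 0)
  have hkey : ∀ n, ‖κ n‖ ≤ C * w n := by
    intro n
    have heq : max 1 ‖κ n‖ * min 1 ‖κ n‖ = ‖κ n‖ := by
      rcases le_total ‖κ n‖ 1 with h | h
      · rw [max_eq_left h, min_eq_right h, one_mul]
      · rw [max_eq_right h, min_eq_left h, mul_one]
    calc ‖κ n‖ = max 1 ‖κ n‖ * min 1 ‖κ n‖ := heq.symm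
      _ ≤ C * w n := by
          apply mul_le_mul (hC_term n) (hw_term n) (le_min zero_le_one (norm_nonneg _))
            (le_trans zero_le_one hC1)
  refine ⟨hw_mono, fun n => ⟨hw_pos n, hw_le_one n⟩, ?_, ?_⟩
  · -- tendsto
    rw [Metric.tendsto_atTop]
    intro ε hε
    obtain ⟨N, hN⟩ := (Metric.tendsto_atTop.mp h0) (ε / 2) (by linarith)
    refine ⟨N, fun n hn => ?_⟩
    have hwle : w n ≤ ε / 2 := by
      refine ciSup_le fun m => ?_
      have := hN (n + m) (by omega)
      rw [Real.dist_eq, sub_zero, abs_of_nonneg (norm_nonneg _)] at this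
      exact le_trans (min_le_right _ _) this.le
    rw [Real.dist_eq, sub_zero, abs_of_pos (hw_pos n)]
    linarith
  · intro z hz
    have hsum1 : Summable fun n => ‖(κ n) (z n)‖ := by
      refine Summable.of_nonneg_of_le (fun n => norm_nonneg _) (fun n => ?_)
        (hz.mul_left C)
      calc ‖(κ n) (z n)‖ ≤ ‖κ n‖ * ‖z n‖ := (κ n).le_opNorm _
        _ ≤ C * ‖z n‖ := by
            apply mul_le_mul_of_nonneg_right _ (norm_nonneg _)
            exact le_trans (le_max_right _ _) (hC_term n)
    refine ⟨hsum1, ?_⟩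
    have hsum2 : Summable fun n => w n * ‖z n‖ := by
      refine Summable.of_nonneg_of_le
        (fun n => mul_nonneg (hw_pos n).le (norm_nonneg _)) (fun n => ?_) hz
      calc w n * ‖z n‖ ≤ 1 * ‖z n‖ :=
            mul_le_mul_of_nonneg_right (hw_le_one n) (norm_nonneg _)
        _ = ‖z n‖ := one_mul _
    calc ‖∑' n, (κ n) (z n)‖ ≤ ∑' n, ‖(κ n) (z n)‖ := norm_tsum_le_tsum_norm hsum1
      _ ≤ ∑' n, C * (w n * ‖z n‖) := by
          refine Summable.tsum_le_tsum (fun n => ?_) hsum1 (hsum2.mul_left C)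
          calc ‖(κ n) (z n)‖ ≤ ‖κ n‖ * ‖z n‖ := (κ n).le_opNorm _
            _ ≤ (C * w n) * ‖z n‖ :=
                mul_le_mul_of_nonneg_right (hkey n) (norm_nonneg _)
            _ = C * (w n * ‖z n‖) := by ring
      _ = C * ∑' n, w n * ‖z n‖ := tsum_mul_left
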